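/- Let ω : ℝ → ℝ be continuous with |ω(t)| ≤ K(1 + t²) for all t ∈ ℝ and some K > 0, and let α ∈ (0, 1]. Suppose ω is α-Hölder continuous on every compact interval [T₁, T₂] ⊂ ℝ, i.e. for every such interval there is C > 0 with |ω(t) − ω(s)| ≤ C|t − s|^α for all s, t ∈ [T₁, T₂]. Then the function O_t := ω(t) − ∫_{−∞}^t e^{s−t} ω(s) ds is α-Hölder continuous on every compact interval [T₁, T₂] ⊂ ℝ. -/

import Mathlib

open MeasureTheory Real Set Filter

lemma auxF (s : ℝ) : ∀ u : ℝ, HasDerivAt (fun u => Real.exp (u - s) * ((u - 1) ^ 2 + 2))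
    (Real.exp (u - s) * (1 + u ^ 2)) u := by
  intro u
  have h1 : HasDerivAt (fun u : ℝ => Real.exp (u - s)) (Real.exp (u - s)) u := by
    simpa using ((hasDerivAt_id' u).sub_const s).exp
  have h2 : HasDerivAt (fun u : ℝ => (u - 1) ^ 2 + 2) (2 * (u - 1)) u := by
    have := (((hasDerivAt_id u).sub_const 1).pow 2).add_const 2
    simpa [mul_comm] using this
  have := h1.mul h2
  exact this.congr_deriv (by ring)

lemma aux_cont (s : ℝ) : Continuous (fun u : ℝ => Real.exp (u - s) * (1 + u ^ 2)) := by
  fun_prop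

lemma aux_ftc {a s : ℝ} (ha : a ≤ s) :
    (∫ u in a..s, Real.exp (u - s) * (1 + u ^ 2)) ≤ (s - 1) ^ 2 + 2 := by
  rw [intervalIntegral.integral_eq_sub_of_hasDerivAt (fun u _ => auxF s u)
    ((aux_cont s).intervalIntegrable a s)]
  have h1 : 0 ≤ Real.exp (a - s) * ((a - 1) ^ 2 + 2) := by positivity
  have h2 : Real.exp (s - s) = 1 := by simp
  nlinarith [sq_nonneg (s - 1)]

lemma aux_integrable (s : ℝ) :
    IntegrableOn (fun u : ℝ => Real.exp (u - s) * (1 + u ^ 2)) (Set.Iic s) := by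
  apply integrableOn_Iic_of_intervalIntegral_norm_bounded ((s - 1) ^ 2 + 2) s
    (fun i : ℝ => ((aux_cont s).integrableOn_Ioc)) tendsto_id
  filter_upwards [eventually_le_atBot s] with a ha
  have : (∫ x in a..s, ‖Real.exp (x - s) * (1 + x ^ 2)‖) =
      ∫ x in a..s, Real.exp (x - s) * (1 + x ^ 2) := by
    apply intervalIntegral.integral_congr
    intro x _
    simp only [Real.norm_of_nonneg (show (0:ℝ) ≤ Real.exp (x - s) * (1 + x ^ 2) by positivity)]
  simp only [id] at *
  rw [this]
  exact aux_ftc ha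

lemma aux_integral_le (s : ℝ) :
    (∫ u in Set.Iic s, Real.exp (u - s) * (1 + u ^ 2)) ≤ (s - 1) ^ 2 + 2 := by
  have := intervalIntegral_tendsto_integral_Iic s (aux_integrable s) (tendsto_id (α := ℝ))
  apply le_of_tendsto this
  filter_upwards [eventually_le_atBot s] with a ha
  exact aux_ftc ha

/-- The Ornstein–Uhlenbeck process inherits local `α`-Hölder continuity from the
driving path. -/
theorem stmt_5 (ω : ℝ → ℝ) (hω : Continuous ω) (K : ℝ) (hK : 0 < K)
    (hbd : ∀ t : ℝ, |ω t| ≤ K * (1 + t ^ 2))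
    (α : ℝ) (hα : α ∈ Set.Ioc (0:ℝ) 1)
    (hHolder : ∀ T₁ T₂ : ℝ, T₁ ≤ T₂ → ∃ C > 0, ∀ s ∈ Set.Icc T₁ T₂, ∀ t ∈ Set.Icc T₁ T₂,
      |ω t - ω s| ≤ C * |t - s| ^ α)
    (O : ℝ → ℝ)
    (hO : ∀ t : ℝ, O t = ω t - ∫ s in Set.Iic t, Real.exp (s - t) * ω s) :
    ∀ T₁ T₂ : ℝ, T₁ ≤ T₂ → ∃ C > 0, ∀ s ∈ Set.Icc T₁ T₂, ∀ t ∈ Set.Icc T₁ T₂,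
      |O t - O s| ≤ C * |t - s| ^ α := by
  intro T₁ T₂ hT
  obtain ⟨C₀, hC₀, hHol⟩ := hHolder T₁ T₂ hT
  set R : ℝ := max |T₁| |T₂| with hR
  have hR0 : 0 ≤ R := le_trans (abs_nonneg _) (le_max_left _ _)
  set M₀ : ℝ := (R + 1) ^ 2 + 2 with hM₀
  set Kmax : ℝ := K * (1 + R ^ 2) with hKmax
  set L : ℝ := K * M₀ + Kmax with hL
  set D : ℝ := max (T₂ - T₁) 1 with hD
  have hD1 : (1:ℝ) ≤ D := le_max_right _ _
  have hD0 : 0 < D := lt_of_lt_of_le one_pos hD1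
  have hM₀0 : 0 < M₀ := by positivity
  have hKmax0 : 0 < Kmax := by positivity
  have hL0 : 0 ≤ L := by positivity
  have hDle : T₂ - T₁ ≤ D := le_max_left _ _
  have hLD0 : 0 ≤ L * D ^ (1 - α) := by positivity
  clear_value R M₀ Kmax L D
  refine ⟨C₀ + L * D ^ (1 - α), by positivity, ?_⟩
  -- basic facts
  have habs : ∀ u ∈ Set.Icc T₁ T₂, |u| ≤ R := by
    intro u hu
    have h1 : |T₁| ≤ R := le_of_le_of_eq (le_max_left _ _) hR.symm
    have h2 : |T₂| ≤ R := le_of_le_of_eq (le_max_right _ _) hR.symm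
    have h3 := neg_abs_le T₁
    have h4 := le_abs_self T₂
    exact abs_le.mpr ⟨by linarith [hu.1], by linarith [hu.2]⟩
  have hB : ∀ s ∈ Set.Icc T₁ T₂,
      (∫ u in Set.Iic s, Real.exp (u - s) * (1 + u ^ 2)) ≤ M₀ := by
    intro s hs
    refine le_trans (aux_integral_le s) ?_
    have h1 : |s| ≤ R := habs s hs
    have h2 : (s - 1) ^ 2 ≤ (R + 1) ^ 2 := by
      have := abs_le.mp h1
      nlinarith
    simp only [hM₀]; linarith
  have hωb : ∀ u ∈ Set.Icc T₁ T₂, |ω u| ≤ Kmax := by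
    intro u hu
    have h1 := abs_le.mp (habs u hu)
    have h2 : u ^ 2 ≤ R ^ 2 := by nlinarith
    refine le_trans (hbd u) ?_
    simp only [hKmax]
    nlinarith
  have hInt : ∀ t : ℝ, IntegrableOn (fun u => Real.exp (u - t) * ω u) (Set.Iic t) := by
    intro t
    refine Integrable.mono' ((aux_integrable t).const_mul K)
      ((Continuous.mul (by fun_prop) hω).aestronglyMeasurable) ?_
    refine Filter.Eventually.of_forall fun u => ?_
    rw [Real.norm_eq_abs, abs_mul, abs_of_pos (Real.exp_pos _)]
    calc Real.exp (u - t) * |ω u| ≤ Real.exp (u - t) * (K * (1 + u ^ 2)) := by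
          exact mul_le_mul_of_nonneg_left (hbd u) (Real.exp_pos _).le
      _ = K * (Real.exp (u - t) * (1 + u ^ 2)) := by ring
  -- the key one-sided estimate
  have key : ∀ s ∈ Set.Icc T₁ T₂, ∀ t ∈ Set.Icc T₁ T₂, s ≤ t →
      |O t - O s| ≤ (C₀ + L * D ^ (1 - α)) * |t - s| ^ α := by
    intro s hs t ht hst
    rcases eq_or_lt_of_le hst with rfl | hlt
    · simp [sub_self, Real.zero_rpow hα.1.ne']
    have hts0 : 0 < t - s := by linarith
    -- split the integral
    have hint_t : IntegrableOn (fun u => Real.exp (u - t) * ω u) (Set.Iic s) :=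
      (hInt t).mono_set (Set.Iic_subset_Iic.mpr hst)
    have hint_mid : IntegrableOn (fun u => Real.exp (u - t) * ω u) (Set.Ioc s t) :=
      (hInt t).mono_set Set.Ioc_subset_Iic_self
    have hsplit : (∫ u in Set.Iic t, Real.exp (u - t) * ω u)
        = (∫ u in Set.Iic s, Real.exp (u - t) * ω u)
          + ∫ u in Set.Ioc s t, Real.exp (u - t) * ω u := by
      rw [← Set.Iic_union_Ioc_eq_Iic hst]
      exact setIntegral_union (Set.Iic_disjoint_Ioc le_rfl) measurableSet_Ioc hint_t hint_mid
    have hAeq : (∫ u in Set.Iic s, Real.exp (u - t) * ω u)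
        - (∫ u in Set.Iic s, Real.exp (u - s) * ω u)
        = ∫ u in Set.Iic s, (Real.exp (u - t) - Real.exp (u - s)) * ω u := by
      rw [← integral_sub hint_t (hInt s)]
      congr 1; ext u; ring
    -- bound the first term
    have hA : |∫ u in Set.Iic s, (Real.exp (u - t) - Real.exp (u - s)) * ω u|
        ≤ K * M₀ * (t - s) := by
      have hg : Integrable (fun u => (t - s) * (K * (Real.exp (u - s) * (1 + u ^ 2))))
          (volume.restrict (Set.Iic s)) :=
        (((aux_integrable s).const_mul K).const_mul (t - s))
      have hbnd : ∀ u : ℝ, ‖(Real.exp (u - t) - Real.exp (u - s)) * ω u‖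
          ≤ (t - s) * (K * (Real.exp (u - s) * (1 + u ^ 2))) := by
        intro u
        rw [Real.norm_eq_abs, abs_mul]
        have he : Real.exp (u - t) = Real.exp (u - s) * Real.exp (s - t) := by
          rw [← Real.exp_add]; ring_nf
        have h1 : |Real.exp (u - t) - Real.exp (u - s)| ≤ Real.exp (u - s) * (t - s) := by
          rw [abs_sub_comm, abs_of_nonneg (sub_nonneg.mpr (Real.exp_le_exp.mpr (by linarith)))]
          rw [he]
          have := Real.add_one_le_exp (s - t)
          nlinarith [Real.exp_pos (u - s)]
        calc |Real.exp (u - t) - Real.exp (u - s)| * |ω u|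
            ≤ (Real.exp (u - s) * (t - s)) * (K * (1 + u ^ 2)) :=
              mul_le_mul h1 (hbd u) (abs_nonneg _) (by positivity)
          _ = (t - s) * (K * (Real.exp (u - s) * (1 + u ^ 2))) := by ring
      have := norm_integral_le_of_norm_le hg (Filter.Eventually.of_forall hbnd)
      rw [Real.norm_eq_abs] at this
      refine le_trans this ?_
      rw [integral_const_mul, integral_const_mul]
      have hBs := hB s hs
      have h1 : K * (∫ u in Set.Iic s, Real.exp (u - s) * (1 + u ^ 2)) ≤ K * M₀ :=
        mul_le_mul_of_nonneg_left hBs hK.le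
      have h2 := mul_le_mul_of_nonneg_left h1 hts0.le
      exact le_trans h2 (le_of_eq (by ring))
    -- bound the middle term
    have hMid : |∫ u in Set.Ioc s t, Real.exp (u - t) * ω u| ≤ Kmax * (t - s) := by
      have h := norm_setIntegral_le_of_norm_le_const (C := Kmax)
        (s := Set.Ioc s t) (f := fun u => Real.exp (u - t) * ω u)
        (by rw [Real.volume_Ioc]; exact ENNReal.ofReal_lt_top) ?_
      · rw [Real.norm_eq_abs] at h
        refine le_trans h ?_
        rw [Real.volume_real_Ioc_of_le hst]
      · intro x hx
        have hx' : x ∈ Set.Icc T₁ T₂ := ⟨le_trans hs.1 hx.1.le, le_trans hx.2 ht.2⟩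
        rw [Real.norm_eq_abs, abs_mul, abs_of_pos (Real.exp_pos _)]
        have h1 : Real.exp (x - t) ≤ 1 := Real.exp_le_one_iff.mpr (by linarith [hx.2])
        have h2 := hωb x hx'
        have h3 : (0:ℝ) ≤ Kmax := le_trans (abs_nonneg _) h2
        nlinarith [abs_nonneg (ω x), (Real.exp_pos (x - t)).le]
    -- combine
    have hOts : O t - O s = (ω t - ω s)
        - ((∫ u in Set.Iic s, (Real.exp (u - t) - Real.exp (u - s)) * ω u)
          + ∫ u in Set.Ioc s t, Real.exp (u - t) * ω u) := by
      rw [hO t, hO s, ← hAeq]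
      rw [hsplit]; ring
    have h4 : |O t - O s| ≤ C₀ * |t - s| ^ α + L * (t - s) := by
      rw [hOts]
      refine le_trans (abs_sub _ _) ?_
      have h5 := hHol s hs t ht
      have h6 := le_trans (abs_add_le _ _) (add_le_add hA hMid)
      simp only [hL]
      linarith
    refine le_trans h4 ?_
    have hts_le_D : t - s ≤ D := le_trans (by linarith [hs.1, ht.2]) hDle
    have e2 : (t - s) ^ (1 - α) ≤ D ^ (1 - α) :=
      Real.rpow_le_rpow hts0.le hts_le_D (by linarith [hα.2])
    have e3 : (0:ℝ) ≤ (t - s) ^ α := Real.rpow_nonneg hts0.le α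
    have hpow : (t - s) ≤ D ^ (1 - α) * (t - s) ^ α := by
      calc t - s = (t - s) ^ α * (t - s) ^ (1 - α) := by
            rw [← Real.rpow_add hts0]; norm_num
        _ ≤ (t - s) ^ α * D ^ (1 - α) := mul_le_mul_of_nonneg_left e2 e3
        _ = D ^ (1 - α) * (t - s) ^ α := by ring
    have habs_ts : |t - s| = t - s := abs_of_pos hts0
    rw [habs_ts]
    have h7 : L * (t - s) ≤ L * (D ^ (1 - α) * (t - s) ^ α) :=
      mul_le_mul_of_nonneg_left hpow hL0
    have expand : (C₀ + L * D ^ (1 - α)) * (t - s) ^ α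
        = C₀ * (t - s) ^ α + L * (D ^ (1 - α) * (t - s) ^ α) := by ring
    rw [expand]
    linarith
  intro s hs t ht
  rcases le_total s t with h | h
  · exact key s hs t ht h
  · rw [abs_sub_comm (O t) (O s), abs_sub_comm t s]
    exact key t ht s hs h
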